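/- The ratio of the density of a Laplace distribution with scale b centered at 0 to the density of a Laplace distribution with scale b centered at μ is bounded above by e^{|μ|/b} at every point. Consequently, for any measurable set O, P(Lap(b) ∈ O) ≤ e^{|μ|/b}·P(μ + Lap(b) ∈ O). -/

import Mathlib

open MeasureTheory

/-- Density of the Laplace distribution with scale `b` centered at `0`. -/
noncomputable def lapD (b x : ℝ) : ℝ := (1 / (2 * b)) * Real.exp (-|x| / b)

/-- The Laplace distribution with scale `b` centered at `0`. -/
noncomputable def lapM (b : ℝ) : Measure ℝ :=
  volume.withDensity fun x => ENNReal.ofReal (lapD b x)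

/-- The density ratio of a centered Laplace to a `μ`-shifted Laplace is at most
`exp (|μ|/b)` pointwise, and consequently the same bound holds for probabilities
of all measurable sets. -/
theorem laplace_density_ratio (b μ : ℝ) (hb : 0 < b) :
    (∀ x : ℝ, lapD b x ≤ Real.exp (|μ| / b) * lapD b (x - μ)) ∧
    (∀ O : Set ℝ, MeasurableSet O →
      lapM b O ≤ ENNReal.ofReal (Real.exp (|μ| / b)) *
        (volume.withDensity fun x => ENNReal.ofReal (lapD b (x - μ))) O) := by
  have hpt : ∀ x : ℝ, lapD b x ≤ Real.exp (|μ| / b) * lapD b (x - μ) := by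
    intro x
    unfold lapD
    rw [mul_comm (Real.exp (|μ| / b)), mul_assoc, ← Real.exp_add]
    have h1 : (0:ℝ) ≤ 1 / (2 * b) := by positivity
    apply mul_le_mul_of_nonneg_left _ h1
    apply Real.exp_le_exp.2
    rw [← add_div, div_le_div_iff_of_pos_right hb]
    have : |x - μ| ≤ |x| + |μ| := abs_sub x μ
    linarith
  refine ⟨hpt, fun O hO => ?_⟩
  rw [lapM, withDensity_apply _ hO, withDensity_apply _ hO,
    ← lintegral_const_mul' _ _ ENNReal.ofReal_ne_top]
  apply lintegral_mono
  intro x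
  dsimp only
  rw [← ENNReal.ofReal_mul (Real.exp_nonneg _)]
  exact ENNReal.ofReal_le_ofReal (hpt x)
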